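/- Let A, B be groups with subgroup families (A_i)_{i∈I_α}, (B_i)_{i∈I_β} both satisfying (FIRM): A_{I_α∖{i}} ≠ A_{I_α} for each i ∈ I_α and B_{I_β∖{i}} ≠ B_{I_β} for each i ∈ I_β. Then in G = A * B, with G_i defined as ⟨A_i, B⟩ for i ∈ I_α and ⟨A, B_i⟩ for i ∈ I_β, the family (G_i) satisfies (FIRM): for each i ∈ I := I_α ⊔ I_β, G_{I∖{i}} ≠ G_I. Conversely, if (G_i) satisfies (FIRM) then so do (A_i) and (B_i). -/

import Mathlib

open scoped Monoid.Coprod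

open Monoid Function

namespace Stmt12Aux

section CoprodI
variable {ι : Type*} {G : ι → Type*} [∀ i, Group (G i)]
open Monoid.CoprodI

theorem letters_smul [DecidableEq ι] [∀ i, DecidableEq (G i)]
    (H : ∀ i, Subgroup (G i)) {i : ι} {m : G i} (hm : m ∈ H i) {w : Word G}
    (hw : ∀ l ∈ w.toList, l.2 ∈ H l.1) :
    ∀ l ∈ (CoprodI.of m • w).toList, l.2 ∈ H l.1 := by
  rintro ⟨j, m₁⟩ hmem
  rcases (Word.mem_smul_iff).mp hmem with ⟨_, h⟩ | ⟨_, rfl, h⟩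
  · exact hw _ h
  · rcases h with h | ⟨m', hm', rfl⟩ | ⟨_, rfl⟩
    · exact hw _ (List.mem_of_mem_tail h)
    · exact mul_mem hm (hw _ (List.mem_of_mem_head? hm'))
    · exact hm

theorem mem_iSup_iff [DecidableEq ι] [∀ i, DecidableEq (G i)]
    (H : ∀ i, Subgroup (G i)) (x : CoprodI G) :
    x ∈ (⨆ i, (H i).map (CoprodI.of : G i →* CoprodI G)) ↔
      ∀ l ∈ (Word.equiv x).toList, l.2 ∈ H l.1 := by
  constructor
  · intro hx
    rw [Subgroup.iSup_eq_closure] at hx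
    induction hx using Subgroup.closure_induction_left with
    | one =>
      intro l hl
      have h1 : Word.equiv (1 : CoprodI G) = Word.empty := one_smul (CoprodI G) (Word.empty : Word G)
      rw [h1] at hl
      exact absurd hl List.not_mem_nil
    | mul_left y hy z hz ih =>
      obtain ⟨_, ⟨i, rfl⟩, m, hm, rfl⟩ := hy
      have h1 : Word.equiv (CoprodI.of m * z) = CoprodI.of m • Word.equiv z :=
        mul_smul (CoprodI.of m) z (Word.empty : Word G)
      rw [h1]
      exact letters_smul H hm ih
    | inv_mul_cancel y hy z hz ih =>
      obtain ⟨_, ⟨i, rfl⟩, m, hm, rfl⟩ := hy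
      have h0 : (CoprodI.of m)⁻¹ = CoprodI.of m⁻¹ := by rw [← map_inv]
      have h1 : Word.equiv ((CoprodI.of m)⁻¹ * z) = CoprodI.of m⁻¹ • Word.equiv z := by
        rw [h0]; exact mul_smul (CoprodI.of m⁻¹) z (Word.empty : Word G)
      rw [h1]
      exact letters_smul H (inv_mem hm) ih
  · intro hx
    have hxe : x = Word.prod (Word.equiv x) := (Word.equiv.symm_apply_apply x).symm
    rw [hxe, Word.prod]
    refine Subgroup.list_prod_mem _ ?_
    intro y hy
    simp only [List.mem_map] at hy
    obtain ⟨l, hl, rfl⟩ := hy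
    exact Subgroup.mem_iSup_of_mem l.1 (Subgroup.mem_map_of_mem _ (hx l hl))

theorem equiv_of [DecidableEq ι] [∀ i, DecidableEq (G i)] {i : ι} {m : G i} (hm : m ≠ 1) :
    (Word.equiv (CoprodI.of m)).toList = [⟨i, m⟩] := by
  have h1 : Word.fstIdx (Word.empty : Word G) ≠ some i := by
    simp [Word.fstIdx, Word.empty]
  have h2 : Word.equiv (CoprodI.of m) = Word.cons m Word.empty h1 hm :=
    (Word.cons_eq_smul (h1 := h1) (h2 := hm)).symm
  rw [h2]
  rfl

end CoprodI

section Coprod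
universe u v
variable (A : Type u) (B : Type v) [Group A] [Group B]

abbrev Gb : Bool → Type (max u v) := fun b => cond b (ULift.{v} A) (ULift.{u} B)

instance instGbGroup : ∀ b, Group (Gb A B b) := fun b => by
  cases b
  · exact ULift.group
  · exact ULift.group

instance instGbDecEq [DecidableEq A] [DecidableEq B] : ∀ b, DecidableEq (Gb A B b) :=
  fun b => match b with
  | true => inferInstanceAs (DecidableEq (ULift A))
  | false => inferInstanceAs (DecidableEq (ULift B))

theorem comap_equiv_toMonoidHom {N G' : Type*} [Group N] [Group G'] (f : N ≃* G')
    (K : Subgroup G') : K.comap f.toMonoidHom = K.map f.symm.toMonoidHom := by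
  ext x
  simp only [Subgroup.mem_comap, Subgroup.mem_map]
  constructor
  · intro h
    exact ⟨f x, h, f.symm_apply_apply x⟩
  · rintro ⟨y, hy, rfl⟩
    simpa using hy

/-- The inverse family of maps. -/
def gInv : ∀ b, Gb A B b →* A ∗ B
  | true => (Coprod.inl : A →* A ∗ B).comp (MulEquiv.ulift : ULift A ≃* A).toMonoidHom
  | false => (Coprod.inr : B →* A ∗ B).comp (MulEquiv.ulift : ULift B ≃* B).toMonoidHom

noncomputable def e : A ∗ B ≃* CoprodI (Gb A B) :=
  MonoidHom.toMulEquiv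
    (Coprod.lift
      ((CoprodI.of (i := true)).comp (MulEquiv.ulift.symm : A ≃* ULift A).toMonoidHom)
      ((CoprodI.of (i := false)).comp (MulEquiv.ulift.symm : B ≃* ULift B).toMonoidHom))
    (CoprodI.lift (gInv A B))
    (by
      apply Coprod.hom_ext <;> ext x <;>
        simp only [MonoidHom.comp_apply, Coprod.lift_apply_inl, Coprod.lift_apply_inr,
          MonoidHom.id_apply, CoprodI.lift_of, gInv] <;> simp)
    (by
      apply CoprodI.ext_hom
      intro i
      cases i <;> ext x <;> simp [CoprodI.lift_of, gInv] <;> rfl)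

variable {A B}

def Hb (H : Subgroup A) (K : Subgroup B) : ∀ b, Subgroup (Gb A B b) := fun b =>
  match b with
  | true => H.comap (MulEquiv.ulift : ULift A ≃* A).toMonoidHom
  | false => K.comap (MulEquiv.ulift : ULift B ≃* B).toMonoidHom

theorem e_inl (a : A) :
    e A B (Coprod.inl a) = CoprodI.of (i := true) (MulEquiv.ulift.symm a) := rfl

theorem e_inr (b : B) :
    e A B (Coprod.inr b) = CoprodI.of (i := false) (MulEquiv.ulift.symm b) := rfl

theorem map_e (H : Subgroup A) (K : Subgroup B) :
    (H.map Coprod.inl ⊔ K.map Coprod.inr).map (e A B).toMonoidHom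
      = ⨆ b, (Hb H K b).map (CoprodI.of : Gb A B b →* _) := by
  have h1 : Hb H K true = H.comap (MulEquiv.ulift : ULift A ≃* A).toMonoidHom := rfl
  have h2 : Hb H K false = K.comap (MulEquiv.ulift : ULift B ≃* B).toMonoidHom := rfl
  rw [Subgroup.map_sup, iSup_bool_eq, Subgroup.map_map, Subgroup.map_map, h1, h2,
    comap_equiv_toMonoidHom, comap_equiv_toMonoidHom,
    Subgroup.map_map, Subgroup.map_map]
  have ha : (e A B).toMonoidHom.comp Coprod.inl
      = (CoprodI.of (i := true)).comp (MulEquiv.ulift.symm : A ≃* ULift A).toMonoidHom := by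
    ext a; rfl
  have hb : (e A B).toMonoidHom.comp Coprod.inr
      = (CoprodI.of (i := false)).comp (MulEquiv.ulift.symm : B ≃* ULift B).toMonoidHom := by
    ext b; rfl
  rw [ha, hb]

theorem mem_S_iff [DecidableEq A] [DecidableEq B]
    (H : Subgroup A) (K : Subgroup B) (x : A ∗ B) :
    x ∈ H.map Coprod.inl ⊔ K.map Coprod.inr ↔
      ∀ l ∈ (CoprodI.Word.equiv (e A B x)).toList, l.2 ∈ Hb H K l.1 := by
  rw [← mem_iSup_iff, ← map_e]
  constructor
  · intro h
    exact Subgroup.mem_map_of_mem _ h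
  · rintro ⟨y, hy, hxy⟩
    have hyx : y = x := (e A B).injective hxy
    subst hyx
    exact hy

theorem S_iInf [DecidableEq A] [DecidableEq B] {κ : Sort*}
    (h : κ → Subgroup A) (k : κ → Subgroup B) :
    (⨅ t, (h t).map Coprod.inl ⊔ (k t).map Coprod.inr)
      = (⨅ t, h t).map Coprod.inl ⊔ (⨅ t, k t).map (Coprod.inr : B →* A ∗ B) := by
  ext x
  simp only [Subgroup.mem_iInf, mem_S_iff]
  constructor
  · intro hx l hl
    have h' : ∀ t, l.2 ∈ Hb (h t) (k t) l.1 := fun t => hx t l hl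
    rcases l with ⟨b, m⟩
    cases b
    · exact Subgroup.mem_comap.mpr (Subgroup.mem_iInf.mpr fun t =>
        Subgroup.mem_comap.mp (h' t))
    · exact Subgroup.mem_comap.mpr (Subgroup.mem_iInf.mpr fun t =>
        Subgroup.mem_comap.mp (h' t))
  · intro hx t l hl
    have h' := hx l hl
    rcases l with ⟨b, m⟩
    cases b
    · exact Subgroup.mem_comap.mpr (Subgroup.mem_iInf.mp (Subgroup.mem_comap.mp h') t)
    · exact Subgroup.mem_comap.mpr (Subgroup.mem_iInf.mp (Subgroup.mem_comap.mp h') t)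

theorem comap_inl_S [DecidableEq A] [DecidableEq B] (H : Subgroup A) (K : Subgroup B) :
    (H.map Coprod.inl ⊔ K.map Coprod.inr).comap (Coprod.inl : A →* A ∗ B) = H := by
  ext a
  simp only [Subgroup.mem_comap]
  constructor
  · intro ha
    rcases eq_or_ne a 1 with rfl | hne
    · exact one_mem H
    · rw [mem_S_iff] at ha
      have hne' : (MulEquiv.ulift.symm a : ULift A) ≠ 1 := by
        simpa using hne
      rw [e_inl, equiv_of hne'] at ha
      have := ha ⟨true, MulEquiv.ulift.symm a⟩ (List.mem_singleton_self _)
      simpa [Hb, Subgroup.mem_comap] using this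
  · intro ha
    exact le_sup_left (α := Subgroup (A ∗ B)) (Subgroup.mem_map_of_mem _ ha)

theorem comap_inr_S [DecidableEq A] [DecidableEq B] (H : Subgroup A) (K : Subgroup B) :
    (H.map Coprod.inl ⊔ K.map Coprod.inr).comap (Coprod.inr : B →* A ∗ B) = K := by
  ext a
  simp only [Subgroup.mem_comap]
  constructor
  · intro ha
    rcases eq_or_ne a 1 with rfl | hne
    · exact one_mem K
    · rw [mem_S_iff] at ha
      have hne' : (MulEquiv.ulift.symm a : ULift B) ≠ 1 := by
        simpa using hne
      rw [e_inr, equiv_of hne'] at ha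
      have := ha ⟨false, MulEquiv.ulift.symm a⟩ (List.mem_singleton_self _)
      simpa [Hb, Subgroup.mem_comap] using this
  · intro ha
    exact le_sup_right (α := Subgroup (A ∗ B)) (Subgroup.mem_map_of_mem _ ha)

theorem S_eq_iff [DecidableEq A] [DecidableEq B] (H H' : Subgroup A) (K K' : Subgroup B) :
    H.map Coprod.inl ⊔ K.map Coprod.inr = H'.map Coprod.inl ⊔ K'.map (Coprod.inr : B →* A ∗ B) ↔
      H = H' ∧ K = K' := by
  constructor
  · intro h
    constructor
    · rw [← comap_inl_S H K, h, comap_inl_S]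
    · rw [← comap_inr_S H K, h, comap_inr_S]
  · rintro ⟨rfl, rfl⟩; rfl

end Coprod
end Stmt12Aux
/-- The family `(G_i)` of maximal parabolic subgroups of the free product `A ∗ B`
satisfies (FIRM) if and only if both `(A_i)` and `(B_i)` satisfy (FIRM). -/
theorem stmt_12 {A B : Type*} [Group A] [Group B]
    {Iα Iβ : Type*} [Fintype Iα] [Fintype Iβ] [DecidableEq Iα] [DecidableEq Iβ]
    (Ai : Iα → Subgroup A) (Bi : Iβ → Subgroup B)
    (Gi : Iα ⊕ Iβ → Subgroup (A ∗ B))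
    (hGα : ∀ i : Iα, Gi (Sum.inl i)
        = (Ai i).map (Monoid.Coprod.inl : A →* A ∗ B)
          ⊔ (⊤ : Subgroup B).map (Monoid.Coprod.inr : B →* A ∗ B))
    (hGβ : ∀ i : Iβ, Gi (Sum.inr i)
        = (⊤ : Subgroup A).map (Monoid.Coprod.inl : A →* A ∗ B)
          ⊔ (Bi i).map (Monoid.Coprod.inr : B →* A ∗ B)) :
    ((∀ i : Iα, (⨅ j ∈ ({i}ᶜ : Finset Iα), Ai j) ≠ ⨅ j, Ai j) ∧
     (∀ i : Iβ, (⨅ j ∈ ({i}ᶜ : Finset Iβ), Bi j) ≠ ⨅ j, Bi j)) ↔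
    (∀ i : Iα ⊕ Iβ, (⨅ j ∈ ({i}ᶜ : Finset (Iα ⊕ Iβ)), Gi j) ≠ ⨅ j, Gi j) := by
  classical
  set HA : Iα ⊕ Iβ → Subgroup A := Sum.elim Ai (fun _ => ⊤) with hHA
  set HB : Iα ⊕ Iβ → Subgroup B := Sum.elim (fun _ => ⊤) Bi with hHB
  have hG : ∀ j, Gi j = (HA j).map Monoid.Coprod.inl ⊔ (HB j).map Monoid.Coprod.inr := by
    rintro (i | i)
    · exact hGα i
    · exact hGβ i
  -- the full intersection
  have hfull : (⨅ j, Gi j)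
      = (⨅ i, Ai i).map Monoid.Coprod.inl ⊔ (⨅ i, Bi i).map Monoid.Coprod.inr := by
    rw [iInf_congr hG, Stmt12Aux.S_iInf]
    have h1 : (⨅ j, HA j) = ⨅ i, Ai i := by
      rw [iInf_sum]
      simp [hHA]
    have h2 : (⨅ j, HB j) = ⨅ i, Bi i := by
      rw [iInf_sum]
      simp [hHB]
    rw [h1, h2]
  -- punctured intersections, as subgroups of the free product
  have key : ∀ p : Iα ⊕ Iβ → Prop, (⨅ j, ⨅ (_ : p j), Gi j)
      = (⨅ j, ⨅ (_ : p j), HA j).map Monoid.Coprod.inl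
        ⊔ (⨅ j, ⨅ (_ : p j), HB j).map Monoid.Coprod.inr := by
    intro p
    rw [iInf_congr (fun j => iInf_congr (fun _ => hG j))]
    rw [iInf_congr (fun j => Stmt12Aux.S_iInf (fun _ => HA j) (fun _ => HB j)),
      Stmt12Aux.S_iInf]
  -- computing the punctured families
  have hAα : ∀ i₀ : Iα, (⨅ j, ⨅ (_ : j ∈ ({Sum.inl i₀}ᶜ : Finset (Iα ⊕ Iβ))), HA j)
      = ⨅ j ∈ ({i₀}ᶜ : Finset Iα), Ai j := by
    intro i₀
    refine le_antisymm ?_ ?_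
    · refine le_iInf fun a => le_iInf fun ha => ?_
      refine iInf_le_of_le (Sum.inl a) (iInf_le_of_le ?_ le_rfl)
      simp only [Finset.mem_compl, Finset.mem_singleton] at ha ⊢
      simpa using ha
    · refine le_iInf fun j => le_iInf fun hj => ?_
      rcases j with a | b
      · simp only [Finset.mem_compl, Finset.mem_singleton] at hj
        refine iInf_le_of_le a (iInf_le_of_le ?_ le_rfl)
        simpa using hj
      · exact le_top
  have hBα : ∀ i₀ : Iα, (⨅ j, ⨅ (_ : j ∈ ({Sum.inl i₀}ᶜ : Finset (Iα ⊕ Iβ))), HB j)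
      = ⨅ i, Bi i := by
    intro i₀
    refine le_antisymm ?_ ?_
    · refine le_iInf fun b => ?_
      refine iInf_le_of_le (Sum.inr b) (iInf_le_of_le (by simp) le_rfl)
    · refine le_iInf fun j => le_iInf fun hj => ?_
      rcases j with a | b
      · exact le_top
      · exact iInf_le _ b
  have hAβ : ∀ i₀ : Iβ, (⨅ j, ⨅ (_ : j ∈ ({Sum.inr i₀}ᶜ : Finset (Iα ⊕ Iβ))), HA j)
      = ⨅ i, Ai i := by
    intro i₀
    refine le_antisymm ?_ ?_
    · refine le_iInf fun a => ?_
      refine iInf_le_of_le (Sum.inl a) (iInf_le_of_le (by simp) le_rfl)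
    · refine le_iInf fun j => le_iInf fun hj => ?_
      rcases j with a | b
      · exact iInf_le _ a
      · exact le_top
  have hBβ : ∀ i₀ : Iβ, (⨅ j, ⨅ (_ : j ∈ ({Sum.inr i₀}ᶜ : Finset (Iα ⊕ Iβ))), HB j)
      = ⨅ j ∈ ({i₀}ᶜ : Finset Iβ), Bi j := by
    intro i₀
    refine le_antisymm ?_ ?_
    · refine le_iInf fun b => le_iInf fun hb => ?_
      refine iInf_le_of_le (Sum.inr b) (iInf_le_of_le ?_ le_rfl)
      simp only [Finset.mem_compl, Finset.mem_singleton] at hb ⊢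
      simpa using hb
    · refine le_iInf fun j => le_iInf fun hj => ?_
      rcases j with a | b
      · exact le_top
      · simp only [Finset.mem_compl, Finset.mem_singleton] at hj
        refine iInf_le_of_le b (iInf_le_of_le ?_ le_rfl)
        simpa using hj
  rw [Sum.forall]
  apply and_congr
  · apply forall_congr'
    intro i₀
    rw [key (fun j => j ∈ ({Sum.inl i₀}ᶜ : Finset (Iα ⊕ Iβ))), hAα i₀, hBα i₀, hfull]
    rw [Ne, Ne, Stmt12Aux.S_eq_iff]
    simp
  · apply forall_congr'
    intro i₀
    rw [key (fun j => j ∈ ({Sum.inr i₀}ᶜ : Finset (Iα ⊕ Iβ))), hAβ i₀, hBβ i₀, hfull]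
    rw [Ne, Ne, Stmt12Aux.S_eq_iff]
    simp
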